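/- arXiv:math/0402434 — 2 statements merged into one kernel-verified Lean document; each statement's English description precedes it below -/
import Mathlib

section
/- Let G be a finite p-group which does not have the cyclic group of order p as a direct factor, and let C be the largest central elementary abelian subgroup of G. Then every maximal subgroup of G contains C. -/
/-- The largest central elementary abelian subgroup `Ω₁(Z(G))` of a group `G`. -/
def Omega1Center (p : ℕ) (G : Type*) [Group G] : Subgroup G where
  carrier := {g | g ∈ Subgroup.center G ∧ g ^ p = 1}
  one_mem' := ⟨Subgroup.one_mem _, one_pow p⟩
  mul_mem' := by
    rintro a b ⟨ha, hap⟩ ⟨hb, hbp⟩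
    refine ⟨mul_mem ha hb, ?_⟩
    have h : Commute a b := ((Subgroup.mem_center_iff.mp ha) b).symm
    rw [h.mul_pow, hap, hbp, one_mul]
  inv_mem' := by
    rintro a ⟨ha, hap⟩
    exact ⟨inv_mem ha, by rw [inv_pow, hap, inv_one]⟩

/-- The `p`-rank of the centre of `G`. -/
noncomputable def pRankCenter (p : ℕ) (G : Type*) [Group G] : ℕ :=
  (Nat.card (Omega1Center p G)).factorization p

/-- `c : Fin d → A` is a homogeneous system of parameters for the graded `k`-algebra `A`. -/
def IsHSOP (k : Type*) {A : Type*} [CommRing k] [CommRing A] [Algebra k A]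
    (𝒜 : ℕ → Submodule k A) {d : ℕ} (c : Fin d → A) : Prop :=
  (∀ i, SetLike.IsHomogeneousElem 𝒜 (c i)) ∧ AlgebraicIndependent k c ∧
    Module.Finite (Algebra.adjoin k (Set.range c)) A

/-- The essential ideal : classes restricting to zero on every proper subgroup. -/
def essentialIdeal {k : Type*} [Field k] {G : Type*} [Group G]
    {HG : Type*} [CommRing HG] [Algebra k HG]
    {HS : Subgroup G → Type*} [∀ K, CommRing (HS K)] [∀ K, Algebra k (HS K)]
    (res : (K : Subgroup G) → HG →ₐ[k] HS K) : Ideal HG :=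
  ⨅ (K : Subgroup G) (_ : K ≠ ⊤), RingHom.ker (res K).toRingHom

/-- Krull dimension of a module. -/
noncomputable def moduleKrullDim (R : Type*) [CommRing R] (M : Type*) [AddCommGroup M]
    [Module R M] : WithBot ℕ∞ :=
  ringKrullDim (R ⧸ (⊤ : Submodule R M).annihilator)

/-- Depth of a module with respect to an ideal. -/
noncomputable def moduleDepth (R : Type*) [CommRing R] (I : Ideal R) (M : Type*)
    [AddCommGroup M] [Module R M] : WithBot ℕ∞ :=
  ⨆ rs ∈ {rs : List R | (∀ r ∈ rs, r ∈ I) ∧ RingTheory.Sequence.IsRegular M rs},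
    (rs.length : WithBot ℕ∞)

/-- A module over a graded connected `k`-algebra is Cohen--Macaulay if its depth with respect
to the irrelevant (augmentation) ideal equals its Krull dimension. -/
def IsCohenMacaulayGradedMod {k A : Type*} [Field k] [CommRing A] [Algebra k A]
    (𝒜 : ℕ → Submodule k A) [GradedAlgebra 𝒜]
    (M : Type*) [AddCommGroup M] [Module A M] : Prop :=
  moduleDepth A (HomogeneousIdeal.irrelevant 𝒜).toIdeal M = moduleKrullDim A M

/-- every maximal subgroup contains `C` when `C_p` is not a direct factor. -/
theorem omega1Center_le_maximal_subgroup
    (p : ℕ) [Fact p.Prime]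
    (G : Type) [Group G] [Finite G] (hG : IsPGroup p G)
    -- `G` does not have the cyclic group of order `p` as a direct factor
    (hfac : ∀ (H : Type) [Group H], ¬ Nonempty (G ≃* H × Multiplicative (ZMod p)))
    -- every maximal subgroup contains the largest central elementary abelian subgroup
    (K : Subgroup G) (hK : IsCoatom K) :
    Omega1Center p G ≤ K := by
  intro z hz
  have hzc : z ∈ Subgroup.center G := hz.1
  have hzp : z ^ p = 1 := hz.2
  by_contra hzK
  have hp : p.Prime := Fact.out
  have hz1 : z ≠ 1 := fun h => hzK (h ▸ K.one_mem)
  have hord : orderOf z = p := orderOf_eq_prime hzp hz1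
  set Z := Subgroup.zpowers z with hZ
  have hZcentral : ∀ w : G, w ∈ Z → w ∈ Subgroup.center G := by
    rintro w ⟨n, rfl⟩
    exact Subgroup.zpow_mem _ hzc n
  have hZnormal : Z.Normal := by
    constructor
    intro n hn g
    have hc := Subgroup.mem_center_iff.mp (hZcentral n hn) g
    have : g * n * g⁻¹ = n := by rw [hc]; group
    rw [this]; exact hn
  have hkey : ∀ w : G, w ∈ Z → w ∈ K → w = 1 := by
    intro w hwZ hwK
    by_contra hw1
    obtain ⟨n, rfl⟩ := hwZ
    have hnd : ¬ ((p : ℤ) ∣ n) := by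
      rintro ⟨m, rfl⟩
      apply hw1
      show z ^ ((p : ℤ) * m) = 1
      rw [zpow_mul, zpow_natCast, hzp, one_zpow]
    have hcop : IsCoprime (p : ℤ) n :=
      ((Nat.prime_iff_prime_int.mp hp).irreducible.coprime_iff_not_dvd).mpr hnd
    obtain ⟨a, b, hab⟩ := hcop
    have hzmem : z = (z ^ n) ^ b := by
      calc z = z ^ (a * (p : ℤ) + b * n) := by rw [hab, zpow_one]
        _ = (z ^ (p : ℤ)) ^ a * (z ^ n) ^ b := by
            rw [zpow_add, mul_comm a, zpow_mul, mul_comm b, zpow_mul]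
        _ = (z ^ n) ^ b := by
            rw [zpow_natCast, hzp]; simp
    exact hzK (hzmem ▸ K.zpow_mem hwK b)
  have hlt : K < K ⊔ Z := lt_of_le_of_ne le_sup_left
    (fun h => hzK (by rw [h]; exact Subgroup.mem_sup_right (Subgroup.mem_zpowers z)))
  have hsup : K ⊔ Z = ⊤ := hK.2 _ hlt
  have comm : ∀ (k : K) (w : Z), Commute (K.subtype k) (Z.subtype w) :=
    fun k w => Subgroup.mem_center_iff.mp (hZcentral _ w.2) k
  let φ : (↥K × ↥Z) →* G := MonoidHom.noncommCoprod K.subtype Z.subtype comm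
  have hbij : Function.Bijective φ := by
    constructor
    · rw [injective_iff_map_eq_one]
      rintro ⟨k, w⟩ h
      simp only [φ, MonoidHom.noncommCoprod_apply, Subgroup.coe_subtype] at h
      have hwK : (w : G) ∈ K := by
        have hw : (w : G) = (↑k)⁻¹ := eq_inv_of_mul_eq_one_right h
        exact hw ▸ K.inv_mem k.2
      have hw1 : (w : G) = 1 := hkey _ w.2 hwK
      have hk1 : (k : G) = 1 := by rwa [hw1, mul_one] at h
      exact Prod.ext (Subtype.ext hk1) (Subtype.ext hw1)
    · intro g
      have hg : g ∈ (↑(K ⊔ Z) : Set G) := by rw [hsup]; trivial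
      rw [Subgroup.mul_normal K Z] at hg
      obtain ⟨k, hk, w, hw, rfl⟩ := hg
      exact ⟨(⟨k, hk⟩, ⟨w, hw⟩), rfl⟩
  have e2 : ↥Z ≃* Multiplicative (ZMod p) :=
    mulEquivOfPrimeCardEq (by rw [hZ, Nat.card_zpowers, hord])
      (by simp [Nat.card_eq_fintype_card])
  have e : G ≃* ↥K × Multiplicative (ZMod p) :=
    (MulEquiv.ofBijective φ hbij).symm.trans
      (MulEquiv.prodCongr (MulEquiv.refl ↥K) e2)
  exact hfac ↥K ⟨e⟩
end

section
/- Let R be a graded polynomial algebra over a field k and let T be a graded R-module equipped with a descending chain of graded R-submodules T = T_{i_0} ⊇ T_{i_0+1} ⊇ T_{i_0+2} ⊇ ⋯ such that ⋂_{i ≥ i_0} T_i = {0}, each T_i is concentrated in degrees ≥ i, and each quotient T_i/T_{i+1} is a free R-module. Then T is a free R-module. -/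
set_option maxHeartbeats 2000000 in
/-- a graded module with a free exhaustive filtration is free. -/
theorem free_of_free_graded_filtration
    (k : Type) [Field k]
    -- `R = k[ζ₁,…,ζ_d]`, a graded polynomial `k`-algebra on homogeneous generators of
    -- positive degree
    (R : Type) [CommRing R] [Algebra k R]
    (ℛ : ℕ → Submodule k R) [GradedAlgebra ℛ]
    (d : ℕ) (g : Fin d → R)
    (hgind : AlgebraicIndependent k g)
    (hgtop : Algebra.adjoin k (Set.range g) = ⊤)
    (hghom : ∀ i, ∃ n, 0 < n ∧ g i ∈ ℛ n)
    -- `T` a graded `R`-module (graded in degrees `≥ 0`, hence bounded below)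
    (T : Type) [AddCommGroup T] [Module k T] [Module R T] [IsScalarTower k R T]
    (𝒯 : ℕ → Submodule k T) [DirectSum.Decomposition 𝒯]
    (hgrT : ∀ (m n : ℕ) (a : R) (x : T), a ∈ ℛ m → x ∈ 𝒯 n → a • x ∈ 𝒯 (m + n))
    -- a descending chain of graded submodules `T = T_{i₀} ⊇ T_{i₀+1} ⊇ ⋯`
    (i₀ : ℕ) (chain : ℕ → Submodule R T)
    (htop : chain i₀ = ⊤)
    (hdesc : ∀ i, i₀ ≤ i → chain (i + 1) ≤ chain i)
    (hchaingr : ∀ i, i₀ ≤ i → ∀ x ∈ chain i, ∀ j,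
      (DirectSum.decompose 𝒯 x j : T) ∈ chain i)
    -- with trivial intersection,
    (hinter : ⨅ (i : ℕ) (_ : i₀ ≤ i), chain i = ⊥)
    -- each `T_i` concentrated in degrees `≥ i`,
    (hconc : ∀ i, i₀ ≤ i → ∀ x ∈ chain i, ∀ j, j < i →
      (DirectSum.decompose 𝒯 x j : T) = 0)
    -- and each quotient `T_i/T_{i+1}` a free `R`-module
    (hfree : ∀ i, i₀ ≤ i →
      Module.Free R (↥(chain i) ⧸ (chain (i + 1)).comap (chain i).subtype)) :
    -- then `T` is a free `R`-module
    Module.Free R T := by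
  classical
  -- Reindex the chain.
  set C : ℕ → Submodule R T := fun j => chain (i₀ + j) with hCdef
  have hle : ∀ j : ℕ, i₀ ≤ i₀ + j := fun j => Nat.le_add_right _ _
  have hCdesc : ∀ j, C (j + 1) ≤ C j := fun j => hdesc (i₀ + j) (hle j)
  have hCanti : ∀ {a b : ℕ}, a ≤ b → C b ≤ C a := by
    intro a b h
    induction h with
    | refl => exact le_rfl
    | step h ih => exact le_trans (hCdesc _) ih
  have hCgr : ∀ j, ∀ x ∈ C j, ∀ n, (DirectSum.decompose 𝒯 x n : T) ∈ C j :=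
    fun j x hx n => hchaingr (i₀ + j) (hle j) x hx n
  have hCconc : ∀ j n, n < i₀ + j → ∀ x ∈ C j, (DirectSum.decompose 𝒯 x n : T) = 0 :=
    fun j n h x hx => hconc (i₀ + j) (hle j) x hx n h
  have hQfree : ∀ j, Module.Free R (↥(C j) ⧸ (C (j + 1)).comap (C j).subtype) :=
    fun j => hfree (i₀ + j) (hle j)
  -- decomposition of `x` as a sum of homogeneous components
  have hxsum : ∀ x : T,
      x = ∑ n ∈ (DirectSum.decompose 𝒯 x).support, (DirectSum.decompose 𝒯 x n : T) :=
    fun x => (DirectSum.sum_support_decompose 𝒯 x).symm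
  -- the degree-`n` component as a `k`-linear map
  set comp : ℕ → (T →ₗ[k] T) := fun n =>
    (𝒯 n).subtype ∘ₗ (DirectSum.component k ℕ (fun n => ↥(𝒯 n)) n) ∘ₗ
      (DirectSum.decomposeLinearEquiv 𝒯).toLinearMap with hcompdef
  have comp_apply : ∀ n (x : T), comp n x = (DirectSum.decompose 𝒯 x n : T) := fun n x => rfl
  have compK : ∀ (m n : ℕ) (a : R), a ∈ ℛ m → ∀ t : T,
      comp (m + n) (a • t) = a • comp n t := by
    intro m n a ha t
    refine DirectSum.Decomposition.inductionOn 𝒯 (motive := fun t => comp (m + n) (a • t) = a • comp n t) ?_ (fun {i} x => ?_) (fun s t hs ht => ?_) t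
    all_goals beta_reduce
    · rw [smul_zero, map_zero, map_zero, smul_zero]
    · have hx : (x : T) ∈ 𝒯 i := x.2
      have hax : a • (x : T) ∈ 𝒯 (m + i) := hgrT m i a x ha hx
      by_cases h : i = n
      · subst h
        rw [comp_apply, comp_apply, DirectSum.decompose_of_mem_same 𝒯 hax,
          DirectSum.decompose_of_mem_same 𝒯 hx]
      · rw [comp_apply, comp_apply, DirectSum.decompose_of_mem_ne 𝒯 hax (by omega),
          DirectSum.decompose_of_mem_ne 𝒯 hx h, smul_zero]
    · rw [smul_add, map_add, map_add, hs, ht, smul_add]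
  -- choose splittings of the quotient maps
  have hsig : ∀ j, ∃ σ : (↥(C j) ⧸ (C (j + 1)).comap (C j).subtype) →ₗ[R] ↥(C j),
      ((C (j + 1)).comap (C j).subtype).mkQ ∘ₗ σ = LinearMap.id := by
    intro j
    haveI := hQfree j
    exact Module.projective_lifting_property _ LinearMap.id (Submodule.mkQ_surjective _)
  choose σ hσ using hsig
  set u : (j : ℕ) → ↥(C j) →ₗ[R] T := fun j =>
    (C j).subtype ∘ₗ (σ j) ∘ₗ ((C (j + 1)).comap (C j).subtype).mkQ with hudef
  have hu_mem : ∀ j (z : ↥(C j)), u j z ∈ C j := fun j z => (σ j _).2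
  have hu_sub : ∀ j (z : ↥(C j)), (z : T) - u j z ∈ C (j + 1) := by
    intro j z
    have h1 : ((C (j + 1)).comap (C j).subtype).mkQ (σ j (((C (j + 1)).comap (C j).subtype).mkQ z))
        = ((C (j + 1)).comap (C j).subtype).mkQ z := by
      rw [← LinearMap.comp_apply, hσ j, LinearMap.id_apply]
    have h2 : z - σ j (((C (j + 1)).comap (C j).subtype).mkQ z)
        ∈ (C (j + 1)).comap (C j).subtype := by
      rw [← Submodule.Quotient.mk_eq_zero, Submodule.Quotient.mk_sub, ← Submodule.mkQ_apply,
        ← Submodule.mkQ_apply, h1, sub_self]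
    simpa [hudef] using h2
  have hu_zero : ∀ j (z : ↥(C j)), (z : T) ∈ C (j + 1) → u j z = 0 := by
    intro j z hz
    have : ((C (j + 1)).comap (C j).subtype).mkQ z = 0 := by
      rw [Submodule.mkQ_apply, Submodule.Quotient.mk_eq_zero]
      exact hz
    simp [hudef, this]
  -- a `k`-linear projection onto `C j`
  have hcompl : ∀ j, ∃ q : Submodule k T, IsCompl ((C j).restrictScalars k) q :=
    fun j => Submodule.exists_isCompl _
  choose W hW using hcompl
  set tau : (j : ℕ) → (T →ₗ[k] T) := fun j =>
    ((u j).restrictScalars k) ∘ₗ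
      ((Submodule.restrictScalarsEquiv k R T (C j)).restrictScalars k).toLinearMap ∘ₗ
      (Submodule.projectionOnto _ _ (hW j)) with htaudef
  have tau_eq : ∀ j (y : T) (hy : y ∈ C j), tau j y = u j ⟨y, hy⟩ := by
    intro j y hy
    have h1 : Submodule.projectionOnto _ _ (hW j) y =
        (⟨y, hy⟩ : (C j).restrictScalars k) :=
      Submodule.projectionOnto_apply_left (hW j) (⟨y, hy⟩ : (C j).restrictScalars k)
    simp [htaudef, h1]
    rfl
  -- the homogenized splitting `ψ j : T → T`
  set ψ : (j : ℕ) → (T →ₗ[k] T) := fun j =>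
    (DirectSum.toModule k ℕ T (fun n => (comp n) ∘ₗ (tau j) ∘ₗ (𝒯 n).subtype)) ∘ₗ
      (DirectSum.decomposeLinearEquiv 𝒯).toLinearMap with hψdef
  have ψ_homog : ∀ j n (x : T), x ∈ 𝒯 n → ψ j x = comp n (tau j x) := by
    intro j n x hx
    have h1 : (DirectSum.decomposeLinearEquiv 𝒯).toLinearMap x
        = DirectSum.lof k ℕ (fun n => ↥(𝒯 n)) n ⟨x, hx⟩ := by
      simp [DirectSum.decomposeLinearEquiv_apply, DirectSum.decompose_of_mem 𝒯 hx, DirectSum.lof_eq_of]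
    rw [hψdef]
    simp only [LinearMap.comp_apply, h1, DirectSum.toModule_lof]
    rfl
  -- the master computation for homogeneous elements
  have master : ∀ j n (x : T), x ∈ 𝒯 n → ∀ hxC : x ∈ C j,
      ψ j x = comp n (u j ⟨x, hxC⟩) ∧ ψ j x ∈ C j ∧ ψ j x ∈ 𝒯 n ∧ x - ψ j x ∈ C (j + 1) := by
    intro j n x hxn hxC
    have h1 : ψ j x = comp n (u j ⟨x, hxC⟩) := by
      rw [ψ_homog j n x hxn, tau_eq j x hxC]
    refine ⟨h1, ?_, ?_, ?_⟩
    · rw [h1, comp_apply]; exact hCgr j _ (hu_mem j ⟨x, hxC⟩) n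
    · rw [h1, comp_apply]; exact (DirectSum.decompose 𝒯 _ n).2
    · have h2 : x - ψ j x = comp n (x - u j ⟨x, hxC⟩) := by
        have hcompx : comp n x = x := by
          rw [comp_apply, DirectSum.decompose_of_mem_same 𝒯 hxn]
        rw [map_sub, hcompx, h1]
      rw [h2, comp_apply]
      exact hCgr (j + 1) _ (hu_sub j ⟨x, hxC⟩) n
  -- ψ j vanishes on C (j+1)
  have ψ_zero : ∀ j (y : T), y ∈ C (j + 1) → ψ j y = 0 := by
    intro j y hy
    have hyC : y ∈ C j := hCdesc j hy
    rw [hxsum y, map_sum]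
    refine Finset.sum_eq_zero fun n _ => ?_
    have hn1 : (DirectSum.decompose 𝒯 y n : T) ∈ C (j + 1) := hCgr (j + 1) y hy n
    have hnC : (DirectSum.decompose 𝒯 y n : T) ∈ C j := hCdesc j hn1
    rw [ψ_homog j n _ (DirectSum.decompose 𝒯 y n).2, tau_eq j _ hnC, hu_zero j _ hn1, map_zero]
  -- ψ j maps C j into C j, into the same degree, with remainder in C (j+1)
  have ψ_mem : ∀ j (x : T), x ∈ C j → ψ j x ∈ C j := by
    intro j x hx
    rw [hxsum x, map_sum]
    refine Submodule.sum_mem _ fun n _ => ?_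
    exact ((master j n _ (DirectSum.decompose 𝒯 x n).2 (hCgr j x hx n)).2.1)
  have ψ_sub : ∀ j (x : T), x ∈ C j → x - ψ j x ∈ C (j + 1) := by
    intro j x hx
    have e : x - ψ j x = ∑ n ∈ (DirectSum.decompose 𝒯 x).support,
        ((DirectSum.decompose 𝒯 x n : T) - ψ j (DirectSum.decompose 𝒯 x n : T)) := by
      conv_lhs => rw [hxsum x]
      rw [map_sum, Finset.sum_sub_distrib]
    rw [e]
    refine Submodule.sum_mem _ fun n _ => ?_
    exact (master j n _ (DirectSum.decompose 𝒯 x n).2 (hCgr j x hx n)).2.2.2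
  have ψ_deg : ∀ j n (x : T), x ∈ 𝒯 n → x ∈ C j → ψ j x ∈ 𝒯 n :=
    fun j n x hxn hxC => (master j n x hxn hxC).2.2.1
  -- R-linearity of ψ j on C j
  have ψ_smul_homog : ∀ j m n (a : R), a ∈ ℛ m → ∀ (x : T), x ∈ 𝒯 n → x ∈ C j →
      ψ j (a • x) = a • ψ j x := by
    intro j m n a ha x hxn hxC
    have haxn : a • x ∈ 𝒯 (m + n) := hgrT m n a x ha hxn
    have haxC : a • x ∈ C j := Submodule.smul_mem _ a hxC
    have h1 : ψ j (a • x) = comp (m + n) (u j ⟨a • x, haxC⟩) := (master j (m + n) _ haxn haxC).1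
    have h2 : ψ j x = comp n (u j ⟨x, hxC⟩) := (master j n x hxn hxC).1
    have h3 : (⟨a • x, haxC⟩ : ↥(C j)) = a • (⟨x, hxC⟩ : ↥(C j)) := rfl
    rw [h1, h2, h3, map_smul, compK m n a ha]
  have ψ_smul_hg : ∀ j m (a : R), a ∈ ℛ m → ∀ (x : T), x ∈ C j →
      ψ j (a • x) = a • ψ j x := by
    intro j m a ha x hxC
    conv_lhs => rw [hxsum x]
    conv_rhs => rw [hxsum x]
    rw [Finset.smul_sum, map_sum, map_sum, Finset.smul_sum]
    refine Finset.sum_congr rfl fun n _ => ?_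
    exact ψ_smul_homog j m n a ha _ (DirectSum.decompose 𝒯 x n).2 (hCgr j x hxC n)
  have ψ_smul : ∀ j (a : R) (x : T), x ∈ C j → ψ j (a • x) = a • ψ j x := by
    intro j a x hxC
    refine DirectSum.Decomposition.inductionOn ℛ (motive := fun a => ψ j (a • x) = a • ψ j x) ?_ (fun {m} b => ?_) (fun b c hb hc => ?_) a
    all_goals beta_reduce
    · rw [zero_smul, zero_smul, map_zero]
    · exact ψ_smul_hg j m (b : R) b.2 x hxC
    · rw [add_smul, add_smul, map_add, hb, hc]
  -- the induced maps on the quotients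
  set ψR : (j : ℕ) → (↥(C j) →ₗ[R] T) := fun j =>
    { toFun := fun z => ψ j (z : T)
      map_add' := fun a b => by
        show ψ j ((a + b : ↥(C j)) : T) = ψ j (a : T) + ψ j (b : T)
        rw [Submodule.coe_add, map_add]
      map_smul' := fun a z => by
        show ψ j (a • (z : T)) = a • ψ j (z : T)
        exact ψ_smul j a (z : T) z.2 } with hψRdef
  have hkerψ : ∀ j, (C (j + 1)).comap (C j).subtype ≤ LinearMap.ker (ψR j) := by
    intro j z hz
    exact ψ_zero j (z : T) hz
  set σbar : (j : ℕ) → ((↥(C j) ⧸ (C (j + 1)).comap (C j).subtype) →ₗ[R] T) := fun j =>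
    Submodule.liftQ _ (ψR j) (hkerψ j) with hσbardef
  have σbar_mk : ∀ j (z : ↥(C j)), σbar j (Submodule.Quotient.mk z) = ψ j (z : T) :=
    fun j z => rfl
  have σbar_mem : ∀ j q, σbar j q ∈ C j := by
    intro j q
    obtain ⟨z, rfl⟩ := Submodule.Quotient.mk_surjective _ q
    rw [σbar_mk]
    exact ψ_mem j (z : T) z.2
  have σbar_inj : ∀ j q, σbar j q ∈ C (j + 1) → q = 0 := by
    intro j q hq
    obtain ⟨z, rfl⟩ := Submodule.Quotient.mk_surjective _ q
    rw [σbar_mk] at hq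
    have h1 : (z : T) - ψ j (z : T) ∈ C (j + 1) := ψ_sub j (z : T) z.2
    have h2 : (z : T) ∈ C (j + 1) := by
      have := Submodule.add_mem _ h1 hq
      rwa [sub_add_cancel] at this
    rw [Submodule.Quotient.mk_eq_zero]
    exact h2
  -- the assembled map
  set Φ : DirectSum ℕ (fun j => ↥(C j) ⧸ (C (j + 1)).comap (C j).subtype) →ₗ[R] T :=
    DirectSum.toModule R ℕ T σbar with hΦdef
  have Φ_lof : ∀ (j : ℕ) (q : ↥(C j) ⧸ (C (j + 1)).comap (C j).subtype),
      Φ (DirectSum.lof R ℕ (fun j => ↥(C j) ⧸ (C (j + 1)).comap (C j).subtype) j q)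
      = σbar j q := fun j q => by
    rw [hΦdef]
    exact DirectSum.toModule_lof (ι := ℕ)
      (M := fun j => ↥(C j) ⧸ (C (j + 1)).comap (C j).subtype) (N := T) (φ := σbar) R j q
  -- surjectivity
  have hsurj_key : ∀ (c j n : ℕ) (x : T), n < i₀ + j + c → x ∈ 𝒯 n → x ∈ C j →
      x ∈ LinearMap.range Φ := by
    intro c
    induction c with
    | zero =>
      intro j n x hn hxn hxC
      have h0 : (DirectSum.decompose 𝒯 x n : T) = 0 := hCconc j n (by omega) x hxC
      rw [DirectSum.decompose_of_mem_same 𝒯 hxn] at h0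
      rw [h0]
      exact Submodule.zero_mem _
    | succ c ih =>
      intro j n x hn hxn hxC
      by_cases hcase : n < i₀ + j
      · have h0 : (DirectSum.decompose 𝒯 x n : T) = 0 := hCconc j n hcase x hxC
        rw [DirectSum.decompose_of_mem_same 𝒯 hxn] at h0
        rw [h0]
        exact Submodule.zero_mem _
      · have hx' : x - ψ j x ∈ C (j + 1) := ψ_sub j x hxC
        have hx'n : x - ψ j x ∈ 𝒯 n := Submodule.sub_mem _ hxn (ψ_deg j n x hxn hxC)
        have h1 : x - ψ j x ∈ LinearMap.range Φ := ih (j + 1) n _ (by omega) hx'n hx'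
        have h2 : ψ j x ∈ LinearMap.range Φ := by
          refine ⟨DirectSum.lof R ℕ _ j (Submodule.Quotient.mk ⟨x, hxC⟩), ?_⟩
          rw [Φ_lof, σbar_mk]
        have := Submodule.add_mem _ h2 h1
        rwa [add_sub_cancel] at this
  have hsurj : Function.Surjective Φ := by
    rw [← LinearMap.range_eq_top, eq_top_iff]
    intro x _
    rw [hxsum x]
    refine Submodule.sum_mem _ fun n _ => ?_
    refine hsurj_key (n + 1) 0 n _ (by omega) (DirectSum.decompose 𝒯 x n).2 ?_
    have hC0 : C 0 = ⊤ := htop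
    rw [hC0]
    exact Submodule.mem_top
  -- injectivity
  have hinj : Function.Injective Φ := by
    suffices hker : LinearMap.ker Φ = ⊥ by
      intro a b hab
      have h := LinearMap.ker_eq_bot'.mp hker (a - b) (by rw [map_sub, hab, sub_self])
      exact sub_eq_zero.mp h
    rw [eq_bot_iff]
    intro w hw
    rw [LinearMap.mem_ker] at hw
    rw [Submodule.mem_bot]
    have hall : ∀ j, w j = 0 := by
      intro j
      induction j using Nat.strong_induction_on with
      | _ j ih =>
        by_cases hj : j ∈ DFinsupp.support w
        · have hwsum : (∑ m ∈ DFinsupp.support w,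
              DirectSum.of (fun j => ↥(C j) ⧸ (C (j + 1)).comap (C j).subtype) m (w m)) = w :=
            DirectSum.sum_support_of w
          have h0 : (∑ m ∈ DFinsupp.support w,
              Submodule.Quotient.mk (p := C (j + 1)) (σbar m (w m))) = 0 := by
            have h0' : (C (j + 1)).mkQ (Φ w) = 0 := by rw [hw, map_zero]
            have h0'' : (C (j + 1)).mkQ (Φ w) = (∑ m ∈ DFinsupp.support w,
                Submodule.Quotient.mk (p := C (j + 1)) (σbar m (w m))) := by
              conv_lhs => rw [← hwsum]
              rw [map_sum, map_sum]
              refine Finset.sum_congr rfl fun m _ => ?_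
              rw [← DirectSum.lof_eq_of R, Φ_lof, Submodule.mkQ_apply]
            rw [← h0'', h0']
          have h1 : ∀ m ∈ DFinsupp.support w, m ≠ j →
              Submodule.Quotient.mk (p := C (j + 1)) (σbar m (w m)) = 0 := by
            intro m _ hm
            rcases lt_or_gt_of_ne hm with hlt | hgt
            · rw [ih m hlt, map_zero, Submodule.Quotient.mk_eq_zero]
              exact Submodule.zero_mem _
            · rw [Submodule.Quotient.mk_eq_zero]
              exact hCanti hgt (σbar_mem m (w m))
          rw [Finset.sum_eq_single j h1 (fun h => absurd hj h)] at h0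
          exact σbar_inj j (w j) ((Submodule.Quotient.mk_eq_zero _).mp h0)
        · exact DFinsupp.notMem_support_iff.mp hj
    exact DFinsupp.ext fun j => by rw [hall j]; rfl
  haveI : ∀ j, Module.Free R (↥(C j) ⧸ (C (j + 1)).comap (C j).subtype) := hQfree
  exact Module.Free.of_equiv (LinearEquiv.ofBijective Φ ⟨hinj, hsurj⟩)
end
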